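/- In (n+1)-dimensional Minkowski space (n ≥ 1) with the canonical time function τ(p) = p₀, the null distance is given explicitly by d̂_τ(p,q) = max{ |q₀ − p₀|, ‖q̄ − p̄‖ } for all p, q. In particular, the d̂_τ-ball of radius R about p is the cylinder {q : |q₀ − p₀| < R and ‖q̄ − p̄‖ < R}. -/

import Mathlib

open scoped BigOperators

/-- A chain from `p` to `q`: a finite sequence `x 0 = p, x 1, …, x k = q` (`k ≥ 1`)
such that consecutive points are causally related in one direction or the other. -/
def IsCausalChain {X : Type*} (R : X → X → Prop) (k : ℕ) (x : ℕ → X) (p q : X) : Prop :=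
  1 ≤ k ∧ x 0 = p ∧ x k = q ∧ ∀ i < k, R (x i) (x (i + 1)) ∨ R (x (i + 1)) (x i)

/-- The null length of a chain. -/
noncomputable def nullLength {X : Type*} (τ : X → ℝ) (k : ℕ) (x : ℕ → X) : ℝ :=
  ∑ i ∈ Finset.range k, |τ (x (i + 1)) - τ (x i)|

/-- The null distance: the infimum (in `[0,∞]`, i.e. in `EReal`, of a set of
nonnegative values) of the null lengths of chains from `p` to `q`. -/
noncomputable def nullDist {X : Type*} (R : X → X → Prop) (τ : X → ℝ) (p q : X) : EReal :=
  sInf {L : EReal | ∃ k x, IsCausalChain R k x p q ∧ L = ((nullLength τ k x : ℝ) : EReal)}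

/-- Minkowski causal relation on `ℝ × ℝⁿ`: `q` is in the causal future of `p`
iff `q₀ - p₀ ≥ ‖q̄ - p̄‖`. -/
def minkCausal {n : ℕ} (p q : ℝ × EuclideanSpace ℝ (Fin n)) : Prop :=
  ‖q.2 - p.2‖ ≤ q.1 - p.1

lemma chain_lower {n : ℕ} {k : ℕ} {x : ℕ → ℝ × EuclideanSpace ℝ (Fin n)}
    {p q : ℝ × EuclideanSpace ℝ (Fin n)}
    (h : IsCausalChain minkCausal k x p q) :
    max |q.1 - p.1| ‖q.2 - p.2‖ ≤ nullLength (fun y => y.1) k x := by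
  obtain ⟨hk, h0, hkq, hstep⟩ := h
  have h1 : |q.1 - p.1| ≤ nullLength (fun y => y.1) k x := by
    have ht : q.1 - p.1 = ∑ i ∈ Finset.range k, ((x (i+1)).1 - (x i).1) := by
      rw [Finset.sum_range_sub (f := fun i => (x i).1), h0, hkq]
    rw [ht]
    exact Finset.abs_sum_le_sum_abs _ _
  have h2 : ‖q.2 - p.2‖ ≤ nullLength (fun y => y.1) k x := by
    have ht : q.2 - p.2 = ∑ i ∈ Finset.range k, ((x (i+1)).2 - (x i).2) := by
      rw [Finset.sum_range_sub (f := fun i => (x i).2), h0, hkq]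
    calc ‖q.2 - p.2‖ ≤ ∑ i ∈ Finset.range k, ‖(x (i+1)).2 - (x i).2‖ := by
          rw [ht]; exact norm_sum_le _ _
      _ ≤ ∑ i ∈ Finset.range k, |(x (i+1)).1 - (x i).1| := by
          apply Finset.sum_le_sum
          intro i hi
          rcases hstep i (Finset.mem_range.mp hi) with hc | hc
          · exact hc.trans (le_abs_self _)
          · rw [norm_sub_rev]
            refine hc.trans ?_
            rw [abs_sub_comm]
            exact le_abs_self _
      _ = nullLength (fun y => y.1) k x := rfl
  exact max_le h1 h2

lemma exists_chain {n : ℕ} (p q : ℝ × EuclideanSpace ℝ (Fin n)) :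
    ∃ k x, IsCausalChain minkCausal k x p q ∧
      nullLength (fun y => y.1) k x = max |q.1 - p.1| ‖q.2 - p.2‖ := by
  set D := ‖q.2 - p.2‖ with hD
  set T := q.1 - p.1 with hT
  rcases le_or_gt D |T| with hcase | hcase
  · refine ⟨1, fun i => if i = 0 then p else q, ⟨le_refl 1, rfl, rfl, ?_⟩, ?_⟩
    · intro i hi
      interval_cases i
      have hpq : minkCausal p q ∨ minkCausal q p := by
        rcases le_or_gt 0 T with h0 | h0
        · left
          show ‖q.2 - p.2‖ ≤ q.1 - p.1
          rw [abs_of_nonneg h0] at hcase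
          rw [← hD, ← hT]; linarith
        · right
          show ‖p.2 - q.2‖ ≤ p.1 - q.1
          rw [abs_of_neg h0] at hcase
          rw [norm_sub_rev, ← hD]
          rw [hT] at hcase; linarith
      simpa using hpq
    · simp [nullLength, max_eq_left hcase]; rfl
  · have hD0 : 0 < D := lt_of_le_of_lt (abs_nonneg T) hcase
    set s : ℝ := (D + T) / 2 with hs
    have hTabs : -D < T ∧ T < D := abs_lt.mp hcase
    have hs0 : 0 ≤ s := by rw [hs]; linarith [hTabs.1]
    have hsD : s ≤ D := by rw [hs]; linarith [hTabs.2]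
    set m : ℝ × EuclideanSpace ℝ (Fin n) := (p.1 + s, p.2 + (s / D) • (q.2 - p.2)) with hm
    have hmp2 : ‖m.2 - p.2‖ = s := by
      simp only [hm, add_sub_cancel_left, norm_smul, Real.norm_eq_abs,
        abs_div, abs_of_nonneg hs0, abs_of_pos hD0]
      field_simp; rw [hD]
    have hmq2 : ‖m.2 - q.2‖ = D - s := by
      have h1 : m.2 - q.2 = (s / D - 1) • (q.2 - p.2) := by
        simp only [hm]
        rw [sub_smul, one_smul]
        abel
      rw [h1, norm_smul, Real.norm_eq_abs]
      have h2 : |s / D - 1| = (D - s) / D := by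
        rw [abs_of_nonpos]
        · field_simp; ring
        · rw [sub_nonpos, div_le_one hD0]; exact hsD
      rw [h2, ← hD]
      field_simp
    have hpm : minkCausal p m := by
      show ‖m.2 - p.2‖ ≤ m.1 - p.1
      rw [hmp2]
      have : m.1 - p.1 = s := by simp [hm]
      rw [this]
    have hqm : minkCausal q m := by
      show ‖m.2 - q.2‖ ≤ m.1 - q.1
      rw [hmq2]
      have h1 : m.1 - q.1 = s - T := by simp only [hm]; rw [hT]; ring
      rw [h1, hs]; linarith
    refine ⟨2, fun i => if i = 0 then p else if i = 1 then m else q, ⟨by norm_num, rfl, rfl, ?_⟩, ?_⟩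
    · intro i hi
      interval_cases i
      · simpa using Or.inl hpm
      · simpa using Or.inr hqm
    · have hlen : nullLength (fun y => y.1) 2
          (fun i => if i = 0 then p else if i = 1 then m else q)
          = |m.1 - p.1| + |q.1 - m.1| := by
        simp [nullLength, Finset.sum_range_succ]
      rw [hlen]
      have h1 : |m.1 - p.1| = s := by
        have : m.1 - p.1 = s := by simp [hm]
        rw [this, abs_of_nonneg hs0]
      have h2 : |q.1 - m.1| = s - T := by
        have h3 : q.1 - m.1 = -(s - T) := by simp only [hm]; rw [hT]; ring
        rw [h3, abs_neg, abs_of_nonneg]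
        rw [hs]; linarith [hTabs.2]
      rw [h1, h2, max_eq_right hcase.le, hs]
      ring

/-- In (n+1)-dimensional Minkowski space (n ≥ 1) with `τ(p) = p₀`,
the null distance is `d̂_τ(p,q) = max{|q₀ − p₀|, ‖q̄ − p̄‖}`; in particular the
`d̂_τ`-ball of radius `R` about `p` is the open cylinder
`{q : |q₀ − p₀| < R and ‖q̄ − p̄‖ < R}`. -/
theorem nullDist_minkowski_formula (n : ℕ) (hn : 1 ≤ n) :
    (∀ p q : ℝ × EuclideanSpace ℝ (Fin n),
      nullDist minkCausal (fun x => x.1) p q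
        = ((max |q.1 - p.1| ‖q.2 - p.2‖ : ℝ) : EReal)) ∧
    (∀ (p : ℝ × EuclideanSpace ℝ (Fin n)) (R : ℝ),
      {q : ℝ × EuclideanSpace ℝ (Fin n) |
          nullDist minkCausal (fun x => x.1) p q < ((R : ℝ) : EReal)}
        = {q : ℝ × EuclideanSpace ℝ (Fin n) | |q.1 - p.1| < R ∧ ‖q.2 - p.2‖ < R}) := by
  have key : ∀ p q : ℝ × EuclideanSpace ℝ (Fin n),
      nullDist minkCausal (fun x => x.1) p q
        = ((max |q.1 - p.1| ‖q.2 - p.2‖ : ℝ) : EReal) := by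
    intro p q
    apply le_antisymm
    · obtain ⟨k, x, hc, hl⟩ := exists_chain p q
      exact sInf_le ⟨k, x, hc, by rw [hl]⟩
    · apply le_sInf
      rintro L ⟨k, x, hc, rfl⟩
      exact_mod_cast chain_lower hc
  refine ⟨key, ?_⟩
  intro p R
  ext q
  simp only [Set.mem_setOf_eq, key p q, EReal.coe_lt_coe_iff]
  exact max_lt_iff
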